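/- Let X, Y be Banach spaces and u : [0,∞) → L(X;Y). If for every x ∈ X there exists t_x ≥ 0 such that the orbit t ↦ u(t)x is differentiable on (t_x,∞), then there exists t₀ ≥ 0 such that for every x ∈ X the orbit t ↦ u(t)x is differentiable on (t₀,∞). -/

import Mathlib

open Filter Topology Metric Set

/-- Nonempty open sets in a Baire space are nonmeager. -/
lemma aux_open_nonmeager {X : Type*} [NormedAddCommGroup X] [NormedSpace ℝ X] [CompleteSpace X]
    {V : Set X} (hVo : IsOpen V) (hVne : V.Nonempty) : ¬ IsMeagre V := by
  intro hVm
  obtain ⟨w, hw1, hw2⟩ := (dense_of_mem_residual hVm).inter_open_nonempty V hVo hVne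
  exact hw2 hw1

/-- Pettis-type dichotomy: a Baire measurable linear subspace (given by closure
properties) which is nonmeager is the whole space. -/
lemma aux_pettis {X : Type*} [NormedAddCommGroup X] [NormedSpace ℝ X] [CompleteSpace X]
    {S : Set X} (hBM : BaireMeasurableSet S)
    (hsub : ∀ a b : X, a ∈ S → b ∈ S → a - b ∈ S)
    (hsmul : ∀ (c : ℝ) (a : X), a ∈ S → c • a ∈ S)
    (hnm : ¬ IsMeagre S) : S = univ := by
  obtain ⟨U, hUo, hSU⟩ := hBM.residualEq_isOpen
  set D : Set X := {x : X | ¬ (x ∈ S ↔ x ∈ U)} with hDdef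
  have hDm : IsMeagre D := by
    show Dᶜ ∈ residual X
    filter_upwards [hSU] with x hx
    simp only [hDdef, mem_compl_iff, mem_setOf_eq, not_not]
    exact iff_of_eq hx
  -- U is nonempty
  have hUne : U.Nonempty := by
    by_contra hU
    rw [not_nonempty_iff_eq_empty] at hU
    refine hnm (hDm.mono fun x hx => ?_)
    simp only [hDdef, mem_setOf_eq, hU, mem_empty_iff_false, iff_false, not_not]
    exact hx
  obtain ⟨x₀, hx₀⟩ := hUne
  obtain ⟨ε, hε, hball⟩ := Metric.isOpen_iff.mp hUo x₀ hx₀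
  -- every v with ‖v‖ < ε lies in S
  have hkey : ∀ v : X, ‖v‖ < ε → v ∈ S := by
    intro v hv
    set D2 : Set X := (fun w => w + v) ⁻¹' D with hD2def
    have hD2m : IsMeagre D2 :=
      hDm.preimage_of_isOpenMap (continuous_id.add continuous_const)
        (Homeomorph.addRight v).isOpenMap
    set V : Set X := ball x₀ (ε - ‖v‖) with hVdef
    have hVne : V.Nonempty := ⟨x₀, by simp [hVdef, sub_pos.mpr hv]⟩
    have hVD : ¬ V ⊆ D ∪ D2 := by
      intro hsubset
      have hUm : IsMeagre (D ∪ D2) := by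
        show (D ∪ D2)ᶜ ∈ residual X
        rw [compl_union]
        exact inter_mem hDm hD2m
      exact aux_open_nonmeager isOpen_ball hVne (hUm.mono hsubset)
    rw [not_subset] at hVD
    obtain ⟨w, hwV, hwD⟩ := hVD
    rw [mem_union, not_or] at hwD
    have hwU : w ∈ U := hball (ball_subset_ball (by linarith [norm_nonneg v]) hwV)
    have hwvU : w + v ∈ U := by
      apply hball
      have h1 : dist (w + v) x₀ ≤ dist (w + v) w + dist w x₀ := dist_triangle _ _ _
      have h2 : dist (w + v) w = ‖v‖ := by
        rw [dist_eq_norm]; simp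
      have h3 : dist w x₀ < ε - ‖v‖ := hwV
      exact mem_ball.mpr (by rw [mem_ball] at *; linarith)
    have hwS : w ∈ S := by
      by_contra hc
      exact hwD.1 (by simp [hDdef, mem_setOf_eq]; tauto)
    have hwvS : w + v ∈ S := by
      by_contra hc
      exact hwD.2 (by simp [hD2def, hDdef, mem_setOf_eq]; tauto)
    have := hsub (w + v) w hwvS hwS
    simpa using this
  -- scale to get everything
  ext x
  simp only [mem_univ, iff_true]
  set c : ℝ := ε / (2 * (‖x‖ + 1)) with hcdef
  have hx1 : (0:ℝ) < ‖x‖ + 1 := by positivity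
  have hc : 0 < c := by positivity
  have hcx : ‖c • x‖ < ε := by
    rw [norm_smul, Real.norm_eq_abs, abs_of_pos hc]
    have h1 : c * ‖x‖ < c * (‖x‖ + 1) := by nlinarith
    have h2 : c * (‖x‖ + 1) = ε / 2 := by
      rw [hcdef]; field_simp
    linarith
  have := hsmul c⁻¹ (c • x) (hkey _ hcx)
  rwa [inv_smul_smul₀ (ne_of_gt hc)] at this

/-- The set of vectors whose orbit is differentiable at `t` is Baire measurable. -/
lemma aux_baire_meas {X Y : Type*} [NormedAddCommGroup X] [NormedSpace ℝ X] [CompleteSpace X]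
    [NormedAddCommGroup Y] [NormedSpace ℝ Y] [CompleteSpace Y]
    (u : ℝ → X →L[ℝ] Y) (t : ℝ) :
    BaireMeasurableSet {x : X | DifferentiableAt ℝ (fun s : ℝ => u s x) t} := by
  have key : {x : X | DifferentiableAt ℝ (fun s : ℝ => u s x) t}
      = ⋂ m : ℕ, ⋃ j : ℕ, {x : X | ∀ h h' : ℝ,
          h ∈ ball t (1/(j+1)) ∧ h ≠ t → h' ∈ ball t (1/(j+1)) ∧ h' ≠ t →
          ‖slope (fun s : ℝ => u s x) t h - slope (fun s : ℝ => u s x) t h'‖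
            ≤ 1/(m+1)} := by
    ext x
    simp only [mem_setOf_eq, mem_iInter, mem_iUnion]
    constructor
    · intro hx m
      have hd := hx.hasDerivAt
      rw [hasDerivAt_iff_tendsto_slope] at hd
      have hε : (0:ℝ) < 1/(m+1)/2 := by positivity
      have hev : ∀ᶠ h in 𝓝[≠] t,
          dist (slope (fun s : ℝ => u s x) t h) (deriv (fun s : ℝ => u s x) t)
            < 1/(m+1)/2 := hd (Metric.ball_mem_nhds _ hε)
      rw [nhdsWithin_basis_ball.eventually_iff] at hev
      obtain ⟨δ, hδ, hδsub⟩ := hev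
      obtain ⟨j, hj⟩ := exists_nat_one_div_lt hδ
      refine ⟨j, fun h h' hh hh' => ?_⟩
      have h1 : dist (slope (fun s : ℝ => u s x) t h) (deriv (fun s : ℝ => u s x) t)
          < 1/(m+1)/2 := hδsub ⟨ball_subset_ball hj.le hh.1, hh.2⟩
      have h2 : dist (slope (fun s : ℝ => u s x) t h') (deriv (fun s : ℝ => u s x) t)
          < 1/(m+1)/2 := hδsub ⟨ball_subset_ball hj.le hh'.1, hh'.2⟩
      have := dist_triangle (slope (fun s : ℝ => u s x) t h)
        (deriv (fun s : ℝ => u s x) t) (slope (fun s : ℝ => u s x) t h')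
      rw [← dist_eq_norm]
      rw [dist_comm] at h2
      linarith
    · intro hx
      have : Cauchy (map (slope (fun s : ℝ => u s x) t) (𝓝[≠] t)) := by
        rw [cauchy_map_iff]
        refine ⟨inferInstance, ?_⟩
        rw [Metric.uniformity_basis_dist.tendsto_right_iff]
        intro ε hε
        obtain ⟨m, hm⟩ := exists_nat_one_div_lt hε
        obtain ⟨j, hj⟩ := hx m
        have hjpos : (0:ℝ) < 1/(j+1) := by positivity
        have hmem : (ball t (1/(j+1)) ∩ {t}ᶜ) ∈ 𝓝[≠] t :=
          inter_mem (mem_nhdsWithin_of_mem_nhds (Metric.ball_mem_nhds _ hjpos))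
            self_mem_nhdsWithin
        filter_upwards [prod_mem_prod hmem hmem] with p hp
        have := hj p.1 p.2 ⟨hp.1.1, hp.1.2⟩ ⟨hp.2.1, hp.2.2⟩
        rw [← dist_eq_norm] at this
        exact lt_of_le_of_lt this hm
      obtain ⟨L, hL⟩ := cauchy_map_iff_exists_tendsto.mp this
      exact (hasDerivAt_iff_tendsto_slope.mpr hL).differentiableAt
  rw [key]
  refine BaireMeasurableSet.iInter fun m => BaireMeasurableSet.iUnion fun j => ?_
  have hclosed : IsClosed {x : X | ∀ h h' : ℝ,
      h ∈ ball t (1/(j+1)) ∧ h ≠ t → h' ∈ ball t (1/(j+1)) ∧ h' ≠ t →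
      ‖slope (fun s : ℝ => u s x) t h - slope (fun s : ℝ => u s x) t h'‖
        ≤ 1/(m+1)} := by
    have heq : {x : X | ∀ h h' : ℝ,
        h ∈ ball t (1/(j+1)) ∧ h ≠ t → h' ∈ ball t (1/(j+1)) ∧ h' ≠ t →
        ‖slope (fun s : ℝ => u s x) t h - slope (fun s : ℝ => u s x) t h'‖
          ≤ 1/(m+1)}
        = ⋂ (a : ℝ) (b : ℝ), {x : X |
          a ∈ ball t (1/(j+1)) ∧ a ≠ t → b ∈ ball t (1/(j+1)) ∧ b ≠ t →
          ‖slope (fun s : ℝ => u s x) t a - slope (fun s : ℝ => u s x) t b‖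
            ≤ 1/(m+1)} := by
      ext x; simp only [mem_setOf_eq, mem_iInter]
    rw [heq]
    refine isClosed_iInter fun a => isClosed_iInter fun b => ?_
    by_cases hpa : a ∈ ball t (1/(j+1)) ∧ a ≠ t
    · by_cases hpb : b ∈ ball t (1/(j+1)) ∧ b ≠ t
      · have : {x : X |
            a ∈ ball t (1/(j+1)) ∧ a ≠ t → b ∈ ball t (1/(j+1)) ∧ b ≠ t →
            ‖slope (fun s : ℝ => u s x) t a - slope (fun s : ℝ => u s x) t b‖
              ≤ 1/(m+1)}
            = {x : X | ‖slope (fun s : ℝ => u s x) t a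
                - slope (fun s : ℝ => u s x) t b‖ ≤ 1/(m+1)} := by
          ext x; simp only [mem_setOf_eq]; tauto
        rw [this]
        have hca : Continuous fun x : X => slope (fun s : ℝ => u s x) t a := by
          have : (fun x : X => slope (fun s : ℝ => u s x) t a)
              = fun x : X => (a - t)⁻¹ • ((u a) x - (u t) x) := by
            funext x; rw [slope_def_module]
          rw [this]
          exact (((u a).continuous.sub (u t).continuous).const_smul _)
        have hcb : Continuous fun x : X => slope (fun s : ℝ => u s x) t b := by
          have : (fun x : X => slope (fun s : ℝ => u s x) t b)
              = fun x : X => (b - t)⁻¹ • ((u b) x - (u t) x) := by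
            funext x; rw [slope_def_module]
          rw [this]
          exact (((u b).continuous.sub (u t).continuous).const_smul _)
        exact isClosed_le ((hca.sub hcb).norm) continuous_const
      · have : {x : X |
            a ∈ ball t (1/(j+1)) ∧ a ≠ t → b ∈ ball t (1/(j+1)) ∧ b ≠ t →
            ‖slope (fun s : ℝ => u s x) t a - slope (fun s : ℝ => u s x) t b‖
              ≤ 1/(m+1)} = univ := by
          ext x; simp only [mem_setOf_eq, mem_univ, iff_true]; tauto
        rw [this]; exact isClosed_univ
    · have : {x : X |
          a ∈ ball t (1/(j+1)) ∧ a ≠ t → b ∈ ball t (1/(j+1)) ∧ b ≠ t →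
          ‖slope (fun s : ℝ => u s x) t a - slope (fun s : ℝ => u s x) t b‖
            ≤ 1/(m+1)} = univ := by
        ext x; simp only [mem_setOf_eq, mem_univ, iff_true]; tauto
      rw [this]; exact isClosed_univ
  exact BaireMeasurableSet.of_compl hclosed.isOpen_compl.baireMeasurableSet

/-- Individually eventually differentiable implies uniformly eventually
differentiable (generalized Iley–Bárta theorem). -/
theorem eventually_differentiable_individual_implies_uniform
    {X Y : Type*} [NormedAddCommGroup X] [NormedSpace ℝ X] [CompleteSpace X]
    [NormedAddCommGroup Y] [NormedSpace ℝ Y] [CompleteSpace Y]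
    (u : ℝ → X →L[ℝ] Y)
    (h : ∀ x : X, ∃ tx : ℝ, 0 ≤ tx ∧ ∀ t : ℝ, tx < t →
      DifferentiableAt ℝ (fun s : ℝ => u s x) t) :
    ∃ t₀ : ℝ, 0 ≤ t₀ ∧ ∀ x : X, ∀ t : ℝ, t₀ < t →
      DifferentiableAt ℝ (fun s : ℝ => u s x) t := by
  by_contra hcon
  push_neg at hcon
  choose x' t' ht' hx' using fun n : ℕ => hcon n (Nat.cast_nonneg n)
  set S : ℝ → Set X := fun t => {x : X | DifferentiableAt ℝ (fun s : ℝ => u s x) t}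
    with hSdef
  have hmeager : ∀ n : ℕ, IsMeagre (S (t' n)) := by
    intro n
    by_contra hnm
    have huniv : S (t' n) = univ := by
      refine aux_pettis (aux_baire_meas u (t' n)) ?_ ?_ hnm
      · intro a b ha hb
        have : (fun s : ℝ => u s (a - b)) = fun s : ℝ => u s a - u s b := by
          funext s; simp
        simpa only [hSdef, mem_setOf_eq, this] using ha.fun_sub hb
      · intro c a ha
        have : (fun s : ℝ => u s (c • a)) = fun s : ℝ => c • u s a := by
          funext s; simp
        simpa only [hSdef, mem_setOf_eq, this] using ha.fun_const_smul c
    exact hx' n (show x' n ∈ S (t' n) by rw [huniv]; trivial)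
  have hU : IsMeagre (⋃ n : ℕ, S (t' n)) := isMeagre_iUnion hmeager
  have hdense : Dense (⋃ n : ℕ, S (t' n))ᶜ := dense_of_mem_residual hU
  obtain ⟨x, hx⟩ := hdense.nonempty
  rw [mem_compl_iff, mem_iUnion, not_exists] at hx
  obtain ⟨tx, _, htx⟩ := h x
  obtain ⟨n, hn⟩ := exists_nat_gt tx
  exact hx n (htx (t' n) (lt_trans hn (ht' n)))
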